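/- Let n ≥ 1, let 𝒢 be a partition of {1,…,n} into nonempty groups, let a ∈ ℝⁿ, and let λ > 0. Define Δ̂ ∈ ℝⁿ groupwise by Δ̂_g = max(‖a_g‖₂ − λ, 0) · a_g / ‖a_g‖₂ when a_g ≠ 0 and Δ̂_g = 0 when a_g = 0. Then Δ̂ is a minimizer of the group (1,2)-norm Σ_{g ∈ 𝒢} ‖Δ_g‖₂ over the feasible set { Δ ∈ ℝⁿ : ‖Δ_g − a_g‖₂ ≤ λ for every g ∈ 𝒢 }. -/

import Mathlib

open Finset

/-- The Euclidean norm of the subvector of `u` indexed by group `k`: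
`‖u_k‖₂ = √(Σ_{i : gr i = k} u_i²)`. -/
noncomputable def groupEuc {n : ℕ} {ι : Type*} [Fintype ι] [DecidableEq ι]
    (gr : Fin n → ι) (u : Fin n → ℝ) (k : ι) : ℝ :=
  Real.sqrt (∑ i ∈ Finset.univ.filter (fun i => gr i = k), (u i) ^ 2)

noncomputable def toE {n : ℕ} {ι : Type*} [Fintype ι] [DecidableEq ι]
    (gr : Fin n → ι) (u : Fin n → ℝ) (k : ι) :
    EuclideanSpace ℝ {i : Fin n // gr i = k} := WithLp.toLp 2 (fun j => u j)

lemma groupEuc_eq_norm {n : ℕ} {ι : Type*} [Fintype ι] [DecidableEq ι]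
    (gr : Fin n → ι) (u : Fin n → ℝ) (k : ι) :
    groupEuc gr u k = ‖toE gr u k‖ := by
  rw [EuclideanSpace.norm_eq, groupEuc]
  congr 1
  have h2 : ∑ x : {i : Fin n // gr i = k}, (u x) ^ 2
      = ∑ i ∈ Finset.univ.filter (fun i => gr i = k), (u i) ^ 2 :=
    (Finset.sum_subtype (Finset.univ.filter fun i => gr i = k) (fun x => by simp) (fun i => (u i) ^ 2)).symm
  rw [← h2]
  simp [toE, Real.norm_eq_abs, sq_abs]

lemma groupEuc_nonneg {n : ℕ} {ι : Type*} [Fintype ι] [DecidableEq ι]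
    (gr : Fin n → ι) (u : Fin n → ℝ) (k : ι) : 0 ≤ groupEuc gr u k :=
  Real.sqrt_nonneg _

lemma groupEuc_congr {n : ℕ} {ι : Type*} [Fintype ι] [DecidableEq ι]
    (gr : Fin n → ι) {u v : Fin n → ℝ} (k : ι)
    (h : ∀ i, gr i = k → u i = v i) : groupEuc gr u k = groupEuc gr v k := by
  unfold groupEuc
  congr 1
  refine Finset.sum_congr rfl fun i hi => ?_
  rw [h i (by simpa using hi)]

lemma groupEuc_smul {n : ℕ} {ι : Type*} [Fintype ι] [DecidableEq ι]
    (gr : Fin n → ι) (u : Fin n → ℝ) (k : ι) (c : ℝ) :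
    groupEuc gr (fun i => c * u i) k = |c| * groupEuc gr u k := by
  rw [groupEuc_eq_norm, groupEuc_eq_norm]
  have : toE gr (fun i => c * u i) k = c • toE gr u k := rfl
  rw [this, norm_smul, Real.norm_eq_abs]

lemma groupEuc_zero_entries {n : ℕ} {ι : Type*} [Fintype ι] [DecidableEq ι]
    (gr : Fin n → ι) (u : Fin n → ℝ) (k : ι) (h : groupEuc gr u k = 0) :
    ∀ i, gr i = k → u i = 0 := by
  rw [groupEuc_eq_norm, norm_eq_zero] at h
  intro i hi
  exact congrFun (congrArg WithLp.ofLp h) ⟨i, hi⟩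

theorem stmt13 (n : ℕ) (hn : 1 ≤ n) {ι : Type*} [Fintype ι] [DecidableEq ι]
    (gr : Fin n → ι) (hgr : Function.Surjective gr)
    (a : Fin n → ℝ) (lam : ℝ) (hlam : 0 < lam) :
    let Δhat : Fin n → ℝ := fun i =>
      if groupEuc gr a (gr i) = 0 then 0
      else max (groupEuc gr a (gr i) - lam) 0 * a i / groupEuc gr a (gr i)
    (∀ k : ι, groupEuc gr (Δhat - a) k ≤ lam) ∧
    (∀ Δ : Fin n → ℝ, (∀ k : ι, groupEuc gr (Δ - a) k ≤ lam) →
      ∑ k : ι, groupEuc gr Δhat k ≤ ∑ k : ι, groupEuc gr Δ k) := by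
  intro Δhat
  have hval : ∀ k, groupEuc gr Δhat k = max (groupEuc gr a k - lam) 0 := by
    intro k
    by_cases hr : groupEuc gr a k = 0
    · have h1 : groupEuc gr Δhat k = groupEuc gr (fun _ => (0:ℝ)) k := by
        refine groupEuc_congr gr k fun i hi => ?_
        show Δhat i = 0
        simp [Δhat, hi, hr]
      rw [h1, hr]
      have : groupEuc gr (fun _ => (0:ℝ)) k = 0 := by simp [groupEuc]
      rw [this]
      rw [max_eq_right (by linarith)]
    · have hrpos : 0 < groupEuc gr a k :=
        lt_of_le_of_ne (groupEuc_nonneg gr a k) (Ne.symm hr)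
      set r := groupEuc gr a k with hrdef
      set c := max (r - lam) 0 / r with hcdef
      have h1 : groupEuc gr Δhat k = groupEuc gr (fun i => c * a i) k := by
        refine groupEuc_congr gr k fun i hi => ?_
        show Δhat i = c * a i
        simp only [Δhat, hi, hr, if_neg, if_false, ← hrdef, hcdef]
        rw [div_mul_eq_mul_div]
      rw [h1, groupEuc_smul, abs_of_nonneg (by positivity)]
      rw [hcdef]
      exact div_mul_cancel₀ _ hr
  constructor
  · intro k
    by_cases hr : groupEuc gr a k = 0
    · have hz := groupEuc_zero_entries gr a k hr
      have h1 : groupEuc gr (Δhat - a) k = groupEuc gr (fun _ => (0:ℝ)) k := by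
        refine groupEuc_congr gr k fun i hi => ?_
        show Δhat i - a i = 0
        simp [Δhat, hi, hr, hz i hi]
      rw [h1]
      have : groupEuc gr (fun _ => (0:ℝ)) k = 0 := by simp [groupEuc]
      rw [this]; linarith
    · have hrpos : 0 < groupEuc gr a k :=
        lt_of_le_of_ne (groupEuc_nonneg gr a k) (Ne.symm hr)
      set r := groupEuc gr a k with hrdef
      set c := max (r - lam) 0 / r with hcdef
      have h1 : groupEuc gr (Δhat - a) k = groupEuc gr (fun i => (c - 1) * a i) k := by
        refine groupEuc_congr gr k fun i hi => ?_
        show Δhat i - a i = (c - 1) * a i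
        simp only [Δhat, hi, hr, if_neg, if_false, ← hrdef, hcdef]
        rw [sub_mul, one_mul, div_mul_eq_mul_div]
      rw [h1, groupEuc_smul, ← hrdef]
      have hc1 : (c - 1) * r = max (r - lam) 0 - r := by
        rw [hcdef, sub_mul, one_mul, div_mul_cancel₀ _ hr]
      have hcr : |c - 1| * r = |max (r - lam) 0 - r| := by
        rw [← hc1, abs_mul, abs_of_pos hrpos]
      rw [hcr]
      rcases le_or_gt r lam with h | h
      · rw [max_eq_right (by linarith)]
        rw [abs_of_nonpos (by linarith)]
        linarith
      · rw [max_eq_left (by linarith)]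
        rw [show r - lam - r = -lam by ring, abs_neg, abs_of_pos hlam]
  · intro Δ hfeas
    refine Finset.sum_le_sum fun k _ => ?_
    rw [hval k]
    refine max_le ?_ (groupEuc_nonneg gr Δ k)
    have key : groupEuc gr a k - groupEuc gr Δ k ≤ groupEuc gr (Δ - a) k := by
      rw [groupEuc_eq_norm, groupEuc_eq_norm, groupEuc_eq_norm]
      have hsub : toE gr (Δ - a) k = toE gr Δ k - toE gr a k := rfl
      rw [hsub, norm_sub_rev]
      exact norm_sub_norm_le _ _
    have := hfeas k
    linarith
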